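/- arXiv:2201.05941 — 3 statements merged into one kernel-verified Lean document; each statement's English description precedes it below -/
import Mathlib

section
/- Let F ⊆ L be differential fields of characteristic zero such that every constant of L (element x ∈ L with δ(x) = 0) lies in F, and let C denote the field of constants of L. Let n ≥ 1 and let Y ∈ GLₙ(L) have entries that are differentially algebraically independent over F, with L = F⟨entries of Y⟩. Set A = δ(Y)·Y⁻¹ (δ applied entrywise) and K = F⟨entries of A⟩. Then: (i) for every D ∈ GLₙ(C) there is a unique field automorphism σ_D of L commuting with δ, fixing F pointwise, and satisfying σ_D(Y) = Y·D (entrywise); (ii) each σ_D fixes K pointwise; (iii) every field automorphism of L that commutes with δ and fixes K pointwise equals σ_D for a unique D ∈ GLₙ(C); and (iv) the map D ↦ σ_D is a group isomorphism from GLₙ(C) onto the group of differential field automorphisms of L fixing K pointwise. (That is, the differential Galois group of L over K is GLₙ(C).) -/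
/-- `F⟨S⟩`: the smallest differential subfield of `L` containing the subfield `F` and the
set `S`, i.e. the subfield generated by `F` together with all iterated derivatives of
elements of `S`. -/
def diffAdjoin {L : Type*} [Field L] (δ : L → L) (F : Subfield L) (S : Set L) : Subfield L :=
  Subfield.closure (↑F ∪ {x | ∃ s ∈ S, ∃ m : ℕ, δ^[m] s = x})

/-- `IsGaugeAut δ F C Y D σ` says that `σ` is a differential field automorphism of `L`
over `F` sending the matrix `Y` to `Y·D`, where `D ∈ GLₙ(C)` has constant entries. -/
def IsGaugeAut {L : Type*} [Field L] (δ : L → L) (F : Subfield L) {n : ℕ}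
    (C : Subfield L) (Y : GL (Fin n) L) (D : GL (Fin n) C) (σ : L ≃+* L) : Prop :=
  (∀ x : L, σ (δ x) = δ (σ x)) ∧ (∀ x ∈ F, σ x = x) ∧
    (∀ i j : Fin n, σ (Y.val i j) = (Y.val * (D.val.map (fun c : C => (c : L)))) i j)

section AuxDiff

variable {L : Type*} [Field L] {δ : L → L}

theorem aux_δ_zero (hδadd : ∀ a b : L, δ (a + b) = δ a + δ b) : δ 0 = 0 := by
  have := hδadd 0 0; simpa using this.symm

theorem aux_δ_one (hδmul : ∀ a b : L, δ (a * b) = a * δ b + δ a * b) : δ 1 = 0 := by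
  have := hδmul 1 1; simpa using this

theorem aux_δ_neg (hδadd : ∀ a b : L, δ (a + b) = δ a + δ b) (a : L) : δ (-a) = - δ a := by
  have h := hδadd a (-a)
  rw [add_neg_cancel, aux_δ_zero hδadd] at h
  linear_combination -h

theorem aux_δ_sum (hδadd : ∀ a b : L, δ (a + b) = δ a + δ b)
    {ι : Type*} (s : Finset ι) (f : ι → L) :
    δ (∑ i ∈ s, f i) = ∑ i ∈ s, δ (f i) :=
  map_sum (AddMonoidHom.mk' δ hδadd) f s

theorem aux_δ_inv (hδmul : ∀ a b : L, δ (a * b) = a * δ b + δ a * b)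
    (a : L) (ha : a ≠ 0) : δ a⁻¹ = -(a⁻¹ * δ a * a⁻¹) := by
  have h : a * δ a⁻¹ + δ a * a⁻¹ = 0 := by
    rw [← hδmul a a⁻¹, mul_inv_cancel₀ ha, aux_δ_one hδmul]
  have hinv : a * a⁻¹ = 1 := mul_inv_cancel₀ ha
  linear_combination a⁻¹ * h - δ a⁻¹ * hinv

/-- The set where a ring hom `τ` commutes with the derivation `δ`, as a subfield. -/
def deltaEqualizer (δ : L → L) (hδadd : ∀ a b : L, δ (a + b) = δ a + δ b)
    (hδmul : ∀ a b : L, δ (a * b) = a * δ b + δ a * b) (τ : L →+* L) : Subfield L where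
  carrier := {x | τ (δ x) = δ (τ x)}
  zero_mem' := by simp [aux_δ_zero hδadd]
  one_mem' := by simp [aux_δ_one hδmul]
  add_mem' := by
    intro a b ha hb
    simp only [Set.mem_setOf_eq] at *
    rw [hδadd, map_add, ha, hb, map_add, hδadd]
  mul_mem' := by
    intro a b ha hb
    simp only [Set.mem_setOf_eq] at *
    rw [hδmul, map_add, map_mul, map_mul, ha, hb, map_mul, hδmul]
  neg_mem' := by
    intro a ha
    simp only [Set.mem_setOf_eq] at *
    rw [aux_δ_neg hδadd, map_neg, ha, map_neg, aux_δ_neg hδadd]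
  inv_mem' := by
    intro a ha
    simp only [Set.mem_setOf_eq] at *
    by_cases h0 : a = 0
    · simp [h0, aux_δ_zero hδadd]
    · have hτ0 : τ a ≠ 0 := fun h => h0 (τ.injective (h.trans (map_zero τ).symm))
      rw [aux_δ_inv hδmul a h0, map_neg, map_mul, map_mul, map_inv₀, ha,
        aux_δ_inv hδmul (τ a) hτ0]

theorem mem_deltaEqualizer (δ : L → L) (hδadd : ∀ a b : L, δ (a + b) = δ a + δ b)
    (hδmul : ∀ a b : L, δ (a * b) = a * δ b + δ a * b) (τ : L →+* L) (x : L) :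
    x ∈ deltaEqualizer δ hδadd hδmul τ ↔ τ (δ x) = δ (τ x) := Iff.rfl

theorem aux_δ_matrix_mul (hδadd : ∀ a b : L, δ (a + b) = δ a + δ b)
    (hδmul : ∀ a b : L, δ (a * b) = a * δ b + δ a * b)
    {n : ℕ} (M N : Matrix (Fin n) (Fin n) L) :
    (M * N).map δ = M.map δ * N + M * N.map δ := by
  ext i j
  simp only [Matrix.map_apply, Matrix.mul_apply, Matrix.add_apply]
  rw [aux_δ_sum hδadd, ← Finset.sum_add_distrib]
  congr 1; ext k
  rw [hδmul]; ring

theorem aux_δ_matrix_one (hδadd : ∀ a b : L, δ (a + b) = δ a + δ b)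
    (hδmul : ∀ a b : L, δ (a * b) = a * δ b + δ a * b) {n : ℕ} :
    (1 : Matrix (Fin n) (Fin n) L).map δ = 0 := by
  ext i j
  simp only [Matrix.map_apply, Matrix.one_apply, Matrix.zero_apply]
  split <;> simp [aux_δ_zero hδadd, aux_δ_one hδmul]

end AuxDiff

open MvPolynomial in
theorem aux_exists_sigma {L : Type*} [Field L] {F : Subfield L} {ι : Type*} (v : ι → L)
    (hindep : AlgebraicIndependent F v)
    (hgen : Subfield.closure (↑F ∪ Set.range v) = ⊤)
    (ψ : MvPolynomial ι F ≃ₐ[F] MvPolynomial ι F) :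
    ∃ σ : L ≃+* L, ∀ p : MvPolynomial ι F,
      σ (MvPolynomial.aeval v p) = MvPolynomial.aeval v (ψ p) := by
  letI alg : Algebra (MvPolynomial ι F) L := ((aeval v : MvPolynomial ι F →ₐ[F] L) :
    MvPolynomial ι F →+* L).toAlgebra
  have halg : ∀ p : MvPolynomial ι F, algebraMap (MvPolynomial ι F) L p = aeval v p :=
    fun _ => rfl
  have hinj : Function.Injective (algebraMap (MvPolynomial ι F) L) := hindep
  haveI : IsFractionRing (MvPolynomial ι F) L := by
    constructor
    constructor
    · rintro ⟨y, hy⟩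
      have hy0 : y ≠ 0 := nonZeroDivisors.ne_zero hy
      have : algebraMap (MvPolynomial ι F) L y ≠ 0 := by
        intro h
        exact hy0 (hinj (h.trans (map_zero _).symm))
      exact isUnit_iff_ne_zero.mpr this
    · intro z
      have hz : z ∈ Subfield.closure (↑F ∪ Set.range v) := by rw [hgen]; trivial
      rw [Subfield.mem_closure_iff] at hz
      obtain ⟨a, ha, b, hb, hab⟩ := hz
      have hsub : Subring.closure (↑F ∪ Set.range v) ≤
          ((aeval v : MvPolynomial ι F →ₐ[F] L).range.toSubring) := by
        apply Subring.closure_le.mpr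
        rintro x (hx | ⟨i, rfl⟩)
        · exact ⟨C ⟨x, hx⟩, by simp; rfl⟩
        · exact ⟨X i, by simp⟩
      obtain ⟨p, hp⟩ := hsub ha
      obtain ⟨q, hq⟩ := hsub hb
      by_cases hb0 : b = 0
      · refine ⟨⟨0, 1⟩, ?_⟩
        simp [← hab, hb0]
      · have hq0 : q ≠ 0 := by rintro rfl; exact hb0 (by simpa using hq.symm)
        refine ⟨⟨p, ⟨q, mem_nonZeroDivisors_of_ne_zero hq0⟩⟩, ?_⟩
        show z * aeval v q = aeval v p
        have hp' : aeval v p = a := hp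
        have hq' : aeval v q = b := hq
        rw [hp', hq', ← hab]
        field_simp
    · intro a b h
      exact ⟨1, by rw [hinj h]⟩
  refine ⟨IsFractionRing.ringEquivOfRingEquiv ψ.toRingEquiv, fun p => ?_⟩
  have := IsFractionRing.ringEquivOfRingEquiv_algebraMap (K := L) (L := L) ψ.toRingEquiv p
  rw [halg, halg] at this
  simpa using this

set_option maxHeartbeats 1000000 in
/-- Let `F ⊆ L` be differential fields of characteristic zero whose constants `C` all lie
in `F`, let `Y ∈ GLₙ(L)` have differentially algebraically independent entries over `F`
generating `L`, let `A = δ(Y)·Y⁻¹` and `K = F⟨entries of A⟩`.  Then: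
(i) each `D ∈ GLₙ(C)` induces a unique differential automorphism `σ_D` of `L` over `F`
with `σ_D(Y) = Y·D`; (ii) each `σ_D` fixes `K` pointwise; (iii) every differential
automorphism of `L` fixing `K` pointwise is `σ_D` for a unique `D ∈ GLₙ(C)`; and
(iv) `D ↦ σ_D` is multiplicative, hence a group isomorphism `GLₙ(C) ≅ Gal^δ(L/K)`. -/
theorem galois_group_of_general_equation_is_GL
    (L : Type*) [Field L] [CharZero L] (δ : L → L)
    (hδadd : ∀ a b : L, δ (a + b) = δ a + δ b)
    (hδmul : ∀ a b : L, δ (a * b) = a * δ b + δ a * b)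
    (F : Subfield L) (hFδ : ∀ x ∈ F, δ x ∈ F)
    (C : Subfield L) (hC : ∀ x : L, x ∈ C ↔ δ x = 0) (hCF : (C : Set L) ⊆ F)
    (n : ℕ) (hn : 1 ≤ n) (Y : GL (Fin n) L)
    (hindep : AlgebraicIndependent F
      (fun p : (Fin n × Fin n) × ℕ => δ^[p.2] (Y.val p.1.1 p.1.2)))
    (hgenL : diffAdjoin δ F {x | ∃ i j, Y.val i j = x} = ⊤)
    (A : Matrix (Fin n) (Fin n) L) (hA : A = (Y.val.map δ) * (Y⁻¹).val)
    (K : Subfield L) (hK : K = diffAdjoin δ F {x | ∃ i j, A i j = x}) :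
    (∀ D : GL (Fin n) C, ∃! σ : L ≃+* L, IsGaugeAut δ F C Y D σ)
    ∧ (∀ (D : GL (Fin n) C) (σ : L ≃+* L), IsGaugeAut δ F C Y D σ → ∀ x ∈ K, σ x = x)
    ∧ (∀ σ : L ≃+* L, (∀ x : L, σ (δ x) = δ (σ x)) → (∀ x ∈ K, σ x = x) →
        ∃! D : GL (Fin n) C, IsGaugeAut δ F C Y D σ)
    ∧ (∀ (D D' : GL (Fin n) C) (σ σ' σ'' : L ≃+* L),
        IsGaugeAut δ F C Y D σ → IsGaugeAut δ F C Y D' σ' →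
        (∀ x : L, σ'' x = σ (σ' x)) → IsGaugeAut δ F C Y (D * D') σ'') := by
  classical
  -- Notation
  set Yv : Matrix (Fin n) (Fin n) L := Y.val with hYv
  set Yi : Matrix (Fin n) (Fin n) L := (Y⁻¹).val with hYidef
  have hYYi : Yv * Yi = 1 := Y.mul_inv
  have hYiY : Yi * Yv = 1 := Y.inv_mul
  set v : (Fin n × Fin n) × ℕ → L := fun p => δ^[p.2] (Yv p.1.1 p.1.2) with hv
  have hv0 : ∀ i j, Yv i j = v ((i, j), 0) := fun i j => rfl
  have hvS : ∀ (q : Fin n × Fin n) (m : ℕ), δ (v (q, m)) = v (q, m + 1) :=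
    fun q m => (Function.iterate_succ_apply' δ m _).symm
  have hgen : Subfield.closure (↑F ∪ Set.range v) = ⊤ := by
    rw [← hgenL]
    unfold diffAdjoin
    congr 1
    congr 1
    ext x
    simp only [Set.mem_setOf_eq, Set.mem_range]
    constructor
    · rintro ⟨⟨⟨i, j⟩, m⟩, rfl⟩; exact ⟨Yv i j, ⟨i, j, rfl⟩, m, rfl⟩
    · rintro ⟨s, ⟨i, j, rfl⟩, m, rfl⟩; exact ⟨((i, j), m), rfl⟩
  have hCδ : ∀ c : C, δ (c : L) = 0 := fun c => (hC _).1 c.2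
  -- coercion of constant matrices
  set cm : Matrix (Fin n) (Fin n) C → Matrix (Fin n) (Fin n) L :=
    fun M => M.map (fun c : C => (c : L)) with hcm
  have cm_mul : ∀ M N, cm (M * N) = cm M * cm N := fun M N => Matrix.map_mul (f := C.subtype)
  have cm_one : cm 1 = 1 := Matrix.map_one _ (map_zero C.subtype) (map_one C.subtype)
  have cmDi : ∀ D : GL (Fin n) C, cm D.val * cm (D⁻¹).val = 1 := by
    intro D
    rw [← cm_mul, Units.mul_inv, cm_one]
  have cmiD : ∀ D : GL (Fin n) C, cm (D⁻¹).val * cm D.val = 1 := by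
    intro D
    rw [← cm_mul, Units.inv_mul, cm_one]
  have cmδ : ∀ M, (cm M).map δ = 0 := by
    intro M; ext i j; exact hCδ _
  -- iterated derivative transfer between two commuting automorphisms
  have hiter2 : ∀ (σ σ' : L ≃+* L), (∀ x, σ (δ x) = δ (σ x)) → (∀ x, σ' (δ x) = δ (σ' x)) →
      ∀ a : L, σ a = σ' a → ∀ m, σ (δ^[m] a) = σ' (δ^[m] a) := by
    intro σ σ' h h' a ha m
    induction m with
    | zero => simpa using ha
    | succ m ih =>
        rw [Function.iterate_succ_apply', h, h', ih]
  -- matrix map by an automorphism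
  have mmul : ∀ (σ : L ≃+* L) (M N : Matrix (Fin n) (Fin n) L),
      (M * N).map ⇑σ = M.map ⇑σ * N.map ⇑σ := fun σ M N => Matrix.map_mul (f := (σ : L →+* L))
  have mone : ∀ (σ : L ≃+* L), (1 : Matrix (Fin n) (Fin n) L).map ⇑σ = 1 :=
    fun σ => Matrix.map_one _ (map_zero σ) (map_one σ)
  -- `F ⊆ K` and `A i j ∈ K`
  have hFK : ∀ x ∈ F, x ∈ K := by
    intro x hx
    rw [hK]
    exact Subfield.subset_closure (Or.inl hx)
  have hAK : ∀ i j, A i j ∈ K := by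
    intro i j
    rw [hK]
    exact Subfield.subset_closure (Or.inr ⟨A i j, ⟨i, j, rfl⟩, 0, rfl⟩)
  -- every gauge automorphism: matrix-level statements
  have hgauge_matrix : ∀ (D : GL (Fin n) C) (σ : L ≃+* L), IsGaugeAut δ F C Y D σ →
      Yv.map ⇑σ = Yv * cm D.val := by
    rintro D σ ⟨hσδ, hσF, hσY⟩
    ext i j
    exact hσY i j
  -- uniqueness of an automorphism given δ-commutation, values on F and on Y entries
  have huniq : ∀ (σ σ' : L ≃+* L), (∀ x, σ (δ x) = δ (σ x)) → (∀ x, σ' (δ x) = δ (σ' x)) →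
      (∀ x ∈ F, σ x = σ' x) → (∀ i j, σ (Yv i j) = σ' (Yv i j)) → σ = σ' := by
    intro σ σ' hσδ hσ'δ hF hY0
    have hle : Subfield.closure (↑F ∪ Set.range v) ≤
        RingHom.eqLocusField (σ : L →+* L) (σ' : L →+* L) := by
      apply Subfield.closure_le.mpr
      rintro x (hx | ⟨⟨⟨i, j⟩, m⟩, rfl⟩)
      · exact hF x hx
      · exact hiter2 σ σ' hσδ hσ'δ (Yv i j) (hY0 i j) m
    refine RingEquiv.ext fun x => ?_
    exact hle (by rw [hgen]; trivial)
  -- uniqueness of `D` given `σ`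
  have hDuniq : ∀ (D D' : GL (Fin n) C) (σ : L ≃+* L),
      IsGaugeAut δ F C Y D σ → IsGaugeAut δ F C Y D' σ → D = D' := by
    intro D D' σ h h'
    have h1 : Yv * cm D.val = Yv * cm D'.val := by
      rw [← hgauge_matrix D σ h, ← hgauge_matrix D' σ h']
    have h2 : cm D.val = cm D'.val := by
      calc cm D.val = Yi * (Yv * cm D.val) := by rw [← mul_assoc, hYiY, one_mul]
        _ = Yi * (Yv * cm D'.val) := by rw [h1]
        _ = cm D'.val := by rw [← mul_assoc, hYiY, one_mul]
    apply Units.ext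
    ext i j
    exact Matrix.ext_iff.mpr h2 i j
  -- part (ii): gauge automorphisms fix K
  have hfixK : ∀ (D : GL (Fin n) C) (σ : L ≃+* L), IsGaugeAut δ F C Y D σ →
      ∀ x ∈ K, σ x = x := by
    intro D σ hg
    obtain ⟨hσδ, hσF, hσY⟩ := hg
    have hmσY : Yv.map ⇑σ = Yv * cm D.val := hgauge_matrix D σ ⟨hσδ, hσF, hσY⟩
    have h1 : (Yv * cm D.val) * Yi.map ⇑σ = 1 := by
      rw [← hmσY, ← mmul σ, hYYi, mone σ]
    have hmσYi : cm D.val * Yi.map ⇑σ = Yi := by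
      calc cm D.val * Yi.map ⇑σ = (Yi * Yv) * (cm D.val * Yi.map ⇑σ) := by rw [hYiY, one_mul]
        _ = Yi * ((Yv * cm D.val) * Yi.map ⇑σ) := by rw [mul_assoc, mul_assoc]
        _ = Yi := by rw [h1, mul_one]
    have h2 : (Yv.map δ).map ⇑σ = (Yv.map ⇑σ).map δ := by
      ext i j; exact hσδ _
    have h3 : (Yv * cm D.val).map δ = Yv.map δ * cm D.val := by
      rw [aux_δ_matrix_mul hδadd hδmul, cmδ, Matrix.mul_zero, add_zero]
    have hmσA : A.map ⇑σ = A := by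
      rw [hA, mmul σ, h2, hmσY, h3, mul_assoc, hmσYi]
    have hAfix : ∀ i j, σ (A i j) = A i j := fun i j => Matrix.ext_iff.mpr hmσA i j
    intro x hx
    rw [hK] at hx
    unfold diffAdjoin at hx
    have hle : Subfield.closure (↑F ∪ {x | ∃ s ∈ {x | ∃ i j, A i j = x}, ∃ m : ℕ, δ^[m] s = x})
        ≤ RingHom.eqLocusField (σ : L →+* L) (RingHom.id L) := by
      apply Subfield.closure_le.mpr
      rintro y (hy | ⟨s, ⟨i, j, rfl⟩, m, rfl⟩)
      · exact hσF y hy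
      · exact hiter2 σ (RingEquiv.refl L) hσδ (fun _ => rfl) (A i j) (hAfix i j) m
    exact hle hx
  -- part (iii): existence of D for a given automorphism fixing K
  have hpart3 : ∀ σ : L ≃+* L, (∀ x : L, σ (δ x) = δ (σ x)) → (∀ x ∈ K, σ x = x) →
      ∃ D : GL (Fin n) C, IsGaugeAut δ F C Y D σ := by
    intro σ hσδ hσK
    have hσF : ∀ x ∈ F, σ x = x := fun x hx => hσK x (hFK x hx)
    have hmσA : A.map ⇑σ = A := by
      ext i j; exact hσK (A i j) (hAK i j)
    have hYd : Yv.map δ = A * Yv := by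
      rw [hA, mul_assoc, hYiY, mul_one]
    have honeδ : (Yi * Yv).map δ = 0 := by rw [hYiY]; exact aux_δ_matrix_one hδadd hδmul
    have hYid : Yi.map δ = -(Yi * A) := by
      have h := aux_δ_matrix_mul hδadd hδmul Yi Yv
      rw [honeδ, hYd] at h
      have h2 : Yi.map δ * Yv = -(Yi * (A * Yv)) := eq_neg_of_add_eq_zero_left h.symm
      calc Yi.map δ = Yi.map δ * Yv * Yi := by rw [mul_assoc, hYYi, mul_one]
        _ = -(Yi * (A * Yv)) * Yi := by rw [h2]
        _ = -(Yi * A) := by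
            rw [neg_mul, ← mul_assoc, mul_assoc (Yi * A), hYYi, mul_one]
    have hmσYv_δ : (Yv.map ⇑σ).map δ = A * Yv.map ⇑σ := by
      have e1 : (Yv.map ⇑σ).map δ = (Yv.map δ).map ⇑σ := by
        ext i j; exact (hσδ _).symm
      rw [e1, hYd, mmul σ, hmσA]
    set Dm : Matrix (Fin n) (Fin n) L := Yi * Yv.map ⇑σ with hDm
    set Em : Matrix (Fin n) (Fin n) L := (Yi.map ⇑σ) * Yv with hEm
    have hDmδ : Dm.map δ = 0 := by
      rw [hDm, aux_δ_matrix_mul hδadd hδmul, hYid, hmσYv_δ, neg_mul, mul_assoc]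
      exact neg_add_cancel _
    have hmσYi_δ : (Yi.map ⇑σ).map δ = -((Yi.map ⇑σ) * A) := by
      have e1 : (Yi.map ⇑σ).map δ = (Yi.map δ).map ⇑σ := by
        ext i j; exact (hσδ _).symm
      rw [e1, hYid]
      ext i j
      simp only [Matrix.map_apply, Matrix.neg_apply, Matrix.mul_apply, map_neg, map_sum, map_mul]
      congr 1
      refine Finset.sum_congr rfl fun k _ => ?_
      rw [hσK (A k j) (hAK k j)]
    have hEmδ : Em.map δ = 0 := by
      rw [hEm, aux_δ_matrix_mul hδadd hδmul, hmσYi_δ, hYd, neg_mul, mul_assoc]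
      exact neg_add_cancel _
    have hDmEm : Dm * Em = 1 := by
      rw [hDm, hEm]
      calc Yi * Yv.map ⇑σ * (Yi.map ⇑σ * Yv)
          = Yi * ((Yv * Yi).map ⇑σ) * Yv := by rw [mmul σ]; noncomm_ring
        _ = 1 := by rw [hYYi, mone σ, mul_one, hYiY]
    have hEmDm : Em * Dm = 1 := by
      rw [hDm, hEm]
      calc Yi.map ⇑σ * Yv * (Yi * Yv.map ⇑σ)
          = Yi.map ⇑σ * Yv.map ⇑σ := by
            rw [mul_assoc, ← mul_assoc Yv, hYYi, one_mul]
        _ = 1 := by rw [← mmul σ, hYiY, mone σ]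
    have hDmC : ∀ i j, Dm i j ∈ C := by
      intro i j
      refine (hC _).2 ?_
      have := Matrix.ext_iff.mpr hDmδ i j
      simpa using this
    have hEmC : ∀ i j, Em i j ∈ C := by
      intro i j
      refine (hC _).2 ?_
      have := Matrix.ext_iff.mpr hEmδ i j
      simpa using this
    set DC : Matrix (Fin n) (Fin n) C := Matrix.of fun i j => ⟨Dm i j, hDmC i j⟩ with hDC
    set EC : Matrix (Fin n) (Fin n) C := Matrix.of fun i j => ⟨Em i j, hEmC i j⟩ with hEC
    have key : ∀ (P Q : Matrix (Fin n) (Fin n) L) (hP : ∀ i j, P i j ∈ C)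
        (hQ : ∀ i j, Q i j ∈ C), P * Q = 1 →
        (Matrix.of (fun i j => (⟨P i j, hP i j⟩ : C)) * Matrix.of (fun i j => (⟨Q i j, hQ i j⟩ : C))
          : Matrix (Fin n) (Fin n) C) = 1 := by
      intro P Q hP hQ hPQ
      ext i j
      have h := Matrix.ext_iff.mpr hPQ i j
      have e1 : ((Matrix.of (fun i j => (⟨P i j, hP i j⟩ : C)) *
          Matrix.of (fun i j => (⟨Q i j, hQ i j⟩ : C)) : Matrix (Fin n) (Fin n) C) i j : L)
          = (P * Q) i j := by
        simp only [Matrix.mul_apply, Matrix.of_apply]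
        push_cast
        rfl
      have e2 : (((1 : Matrix (Fin n) (Fin n) C) i j : C) : L)
          = (1 : Matrix (Fin n) (Fin n) L) i j := by
        simp [Matrix.one_apply, apply_ite (fun c : C => (c : L))]
      exact e1.trans (h.trans e2.symm)
    have hDCEC : DC * EC = 1 := key Dm Em hDmC hEmC hDmEm
    have hECDC : EC * DC = 1 := key Em Dm hEmC hDmC hEmDm
    refine ⟨⟨DC, EC, hDCEC, hECDC⟩, hσδ, hσF, ?_⟩
    intro i j
    have hYvDm : Yv * Dm = Yv.map ⇑σ := by rw [hDm, ← mul_assoc, hYYi, one_mul]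
    show σ (Yv i j) = (Yv * cm DC) i j
    have hcmDC : cm DC = Dm := by ext i j; rfl
    rw [hcmDC, hYvDm]
    rfl
  -- part (i) existence: construction of the gauge automorphism
  have hconstruct : ∀ D : GL (Fin n) C, ∃ σ : L ≃+* L, IsGaugeAut δ F C Y D σ := by
    intro D
    have hle : C ≤ F := fun x hx => hCF hx
    let ρ : C →+* F := Subfield.inclusion hle
    let φ : Matrix (Fin n) (Fin n) F →
        (MvPolynomial ((Fin n × Fin n) × ℕ) F →ₐ[F] MvPolynomial ((Fin n × Fin n) × ℕ) F) :=
      fun M => MvPolynomial.aeval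
        (fun p => ∑ l, MvPolynomial.C (M l p.1.2) * MvPolynomial.X ((p.1.1, l), p.2))
    have hφX : ∀ M (p : (Fin n × Fin n) × ℕ), φ M (MvPolynomial.X p) =
        ∑ l, MvPolynomial.C (M l p.1.2) * MvPolynomial.X ((p.1.1, l), p.2) :=
      fun M p => by simp [φ]
    have hφC : ∀ M (a : F), φ M (MvPolynomial.C a) = MvPolynomial.C a := fun M a => by
      rw [← MvPolynomial.algebraMap_eq]; exact (φ M).commutes a
    have hφid : φ 1 = AlgHom.id F (MvPolynomial ((Fin n × Fin n) × ℕ) F) := by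
      apply MvPolynomial.algHom_ext
      intro p
      rw [hφX]
      simp only [Matrix.one_apply, apply_ite MvPolynomial.C, map_one, map_zero, ite_mul,
        one_mul, zero_mul, AlgHom.coe_id, id_eq]
      rw [Finset.sum_ite_eq' Finset.univ p.1.2 (fun l => MvPolynomial.X ((p.1.1, l), p.2))]
      simp
    have hφcomp : ∀ M N, (φ M).comp (φ N) = φ (M * N) := by
      intro M N
      apply MvPolynomial.algHom_ext
      intro p
      rw [AlgHom.comp_apply, hφX, map_sum, hφX]
      simp only [map_mul, hφC, hφX, Finset.mul_sum, Matrix.mul_apply, map_sum,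
        Finset.sum_mul, MvPolynomial.C_mul]
      rw [Finset.sum_comm]
      refine Finset.sum_congr rfl fun k _ => Finset.sum_congr rfl fun l _ => by ring
    let MD : Matrix (Fin n) (Fin n) F := (D.val).map ρ
    let MDi : Matrix (Fin n) (Fin n) F := ((D⁻¹).val).map ρ
    have hMDmul : MD * MDi = 1 := by
      show (D.val).map ρ * ((D⁻¹).val).map ρ = 1
      rw [← Matrix.map_mul, Units.mul_inv, Matrix.map_one _ (map_zero ρ) (map_one ρ)]
    have hMDimul : MDi * MD = 1 := by
      show ((D⁻¹).val).map ρ * (D.val).map ρ = 1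
      rw [← Matrix.map_mul, Units.inv_mul, Matrix.map_one _ (map_zero ρ) (map_one ρ)]
    let ψ : MvPolynomial ((Fin n × Fin n) × ℕ) F ≃ₐ[F] MvPolynomial ((Fin n × Fin n) × ℕ) F :=
      AlgEquiv.ofAlgHom (φ MD) (φ MDi)
        (by rw [hφcomp, hMDmul, hφid]) (by rw [hφcomp, hMDimul, hφid])
    obtain ⟨σ, hσ⟩ := aux_exists_sigma v hindep hgen ψ
    have hψX : ∀ p, ψ (MvPolynomial.X p) =
        ∑ l, MvPolynomial.C (MD l p.1.2) * MvPolynomial.X ((p.1.1, l), p.2) :=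
      fun p => hφX MD p
    have hσv : ∀ p, σ (v p) = ∑ l, ((D.val l p.1.2 : C) : L) * v ((p.1.1, l), p.2) := by
      intro p
      have h1 := hσ (MvPolynomial.X p)
      rw [MvPolynomial.aeval_X] at h1
      rw [h1, hψX, map_sum]
      refine Finset.sum_congr rfl fun l _ => ?_
      rw [map_mul, MvPolynomial.aeval_C, MvPolynomial.aeval_X]
      rfl
    have hσF : ∀ x ∈ F, σ x = x := by
      intro x hx
      have h1 := hσ (MvPolynomial.C (⟨x, hx⟩ : F))
      have hψC : ψ (MvPolynomial.C (⟨x, hx⟩ : F)) = MvPolynomial.C (⟨x, hx⟩ : F) :=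
        hφC MD _
      rw [hψC, MvPolynomial.aeval_C] at h1
      exact h1
    have hσδ : ∀ x, σ (δ x) = δ (σ x) := by
      have hle2 : Subfield.closure (↑F ∪ Set.range v) ≤
          deltaEqualizer δ hδadd hδmul (σ : L →+* L) := by
        apply Subfield.closure_le.mpr
        rintro x (hx | ⟨⟨⟨i, j⟩, m⟩, rfl⟩)
        · show σ (δ x) = δ (σ x)
          rw [hσF x hx, hσF (δ x) (hFδ x hx)]
        · show σ (δ (v ((i, j), m))) = δ (σ (v ((i, j), m)))
          rw [hvS (i, j) m, hσv, hσv]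
          rw [aux_δ_sum hδadd]
          refine Finset.sum_congr rfl fun l _ => ?_
          rw [hδmul]
          rw [hCδ (D.val l (((i, j), m) : (Fin n × Fin n) × ℕ).1.2), zero_mul, add_zero]
          rw [hvS]
      intro x
      exact hle2 (by rw [hgen]; trivial)
    refine ⟨σ, hσδ, hσF, ?_⟩
    intro i j
    calc σ (Yv i j) = ∑ l, ((D.val l j : C) : L) * v ((i, l), 0) := hσv ((i, j), 0)
      _ = (Yv * cm D.val) i j := by
          rw [Matrix.mul_apply]
          exact Finset.sum_congr rfl fun l _ => mul_comm _ _
  -- part (iv)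
  have hpart4 : ∀ (D D' : GL (Fin n) C) (σ σ' σ'' : L ≃+* L),
      IsGaugeAut δ F C Y D σ → IsGaugeAut δ F C Y D' σ' →
      (∀ x : L, σ'' x = σ (σ' x)) → IsGaugeAut δ F C Y (D * D') σ'' := by
    rintro D D' σ σ' σ'' ⟨h1, h2, h3⟩ ⟨h1', h2', h3'⟩ hcomp
    refine ⟨?_, ?_, ?_⟩
    · intro x; rw [hcomp, hcomp, h1', h1]
    · intro x hx; rw [hcomp, h2' x hx, h2 x hx]
    · intro i j
      rw [hcomp, h3' i j]
      show σ ((Yv * cm D'.val) i j) = (Yv * cm (D * D').val) i j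
      have e1 : σ ((Yv * cm D'.val) i j) = (Yv * cm D.val * cm D'.val) i j := by
        rw [Matrix.mul_apply, map_sum, Matrix.mul_apply (M := Yv * cm D.val)]
        refine Finset.sum_congr rfl fun l _ => ?_
        rw [map_mul, h3 i l]
        congr 1
        exact h2 _ (hCF (D'.val l j).2)
      rw [e1, mul_assoc, ← cm_mul, ← Units.val_mul]
  -- assemble
  refine ⟨?_, hfixK, ?_, hpart4⟩
  · intro D
    obtain ⟨σ, hσ⟩ := hconstruct D
    refine ⟨σ, hσ, ?_⟩
    intro σ' hσ'
    obtain ⟨a1, a2, a3⟩ := hσ'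
    obtain ⟨b1, b2, b3⟩ := hσ
    exact huniq σ' σ a1 b1 (fun x hx => by rw [a2 x hx, b2 x hx])
      (fun i j => by rw [a3 i j, b3 i j])
  · intro σ hσδ hσK
    obtain ⟨D, hD⟩ := hpart3 σ hσδ hσK
    exact ⟨D, hD, fun D' hD' => hDuniq D' D σ hD' hD⟩
end

section
/- Let F₀ ⊆ F ⊆ L be differential field extensions of characteristic zero. Suppose there is an uncountable subset of F that is differentially algebraically independent over F₀, and let S ⊆ L be a countable subset. Then there exist uncountably many elements c ∈ F that are differentially transcendental over F₀⟨S⟩, i.e., such that the iterated derivatives c^{(i)}, i ≥ 0, are algebraically independent over F₀⟨S⟩. -/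
/- ------------------------------------------------------------------
Auxiliary development: algebraic (in)dependence over subfields of an
ambient field, exchange lemmas, and a finiteness counting argument.
------------------------------------------------------------------ -/


set_option synthInstance.maxHeartbeats 1000000
set_option maxHeartbeats 1000000
set_option linter.unusedVariables false

namespace DTAux


variable {L : Type*} [Field L]

/-- Subfield generated by a subfield and a set. -/
def adj (k : Subfield L) (X : Set L) : Subfield L := Subfield.closure (↑k ∪ X)

/-- Algebraic dependence of a family over a subfield, phrased with ambient coefficients. -/
def AlgDep (k : Subfield L) {ι : Type*} (y : ι → L) : Prop :=
  ∃ p : MvPolynomial ι L, p ≠ 0 ∧ (∀ d, MvPolynomial.coeff d p ∈ k) ∧ MvPolynomial.eval y p = 0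

/-- Algebraicity of an element over a subfield, phrased with ambient coefficients. -/
def AlgOver (k : Subfield L) (z : L) : Prop :=
  ∃ p : Polynomial L, p ≠ 0 ∧ (∀ i, p.coeff i ∈ k) ∧ Polynomial.eval z p = 0

theorem restrict_mv (k : Subfield L) {ι : Type*} (q : MvPolynomial ι L)
    (hq : ∀ d, MvPolynomial.coeff d q ∈ k) :
    ∃ p : MvPolynomial ι k, MvPolynomial.map (algebraMap k L) p = q := by
  classical
  refine ⟨∑ d ∈ q.support, MvPolynomial.monomial d (⟨MvPolynomial.coeff d q, hq d⟩ : k), ?_⟩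
  rw [map_sum]
  simp only [MvPolynomial.map_monomial]
  exact (q.as_sum).symm

theorem restrict_poly (k : Subfield L) (q : Polynomial L) (hq : ∀ i, q.coeff i ∈ k) :
    ∃ p : Polynomial k, Polynomial.map (algebraMap k L) p = q := by
  classical
  refine ⟨∑ i ∈ q.support, Polynomial.monomial i (⟨q.coeff i, hq i⟩ : k), ?_⟩
  rw [Polynomial.map_sum]
  simp only [Polynomial.map_monomial]
  exact (q.as_sum_support).symm

theorem not_algebraicIndependent_iff_algDep (k : Subfield L) {ι : Type*} (y : ι → L) :
    ¬ AlgebraicIndependent k y ↔ AlgDep k y := by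
  rw [algebraicIndependent_iff]
  push_neg
  constructor
  · rintro ⟨p, hp0, hpne⟩
    refine ⟨MvPolynomial.map (algebraMap k L) p, ?_, ?_, ?_⟩
    · simpa using (MvPolynomial.map_injective _ (algebraMap (k : Subfield L) L).injective).ne hpne
    · intro d; rw [MvPolynomial.coeff_map]; exact (p.coeff d).2
    · rw [MvPolynomial.eval_map]; exact hp0
  · rintro ⟨q, hq0, hqmem, hqe⟩
    obtain ⟨p, hp⟩ := restrict_mv k q hqmem
    refine ⟨p, ?_, ?_⟩
    · have h2 : MvPolynomial.aeval y p = MvPolynomial.eval y q := by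
        rw [← hp, MvPolynomial.eval_map]; rfl
      rw [h2]; exact hqe
    · rintro rfl; rw [map_zero] at hp; exact hq0 hp.symm

theorem isAlgebraic_iff_algOver (k : Subfield L) (z : L) :
    IsAlgebraic k z ↔ AlgOver k z := by
  constructor
  · rintro ⟨p, hpne, hp0⟩
    refine ⟨p.map (algebraMap k L), ?_, ?_, ?_⟩
    · simpa using (Polynomial.map_injective _ (algebraMap (k : Subfield L) L).injective).ne hpne
    · intro i; rw [Polynomial.coeff_map]; exact (p.coeff i).2
    · rwa [← Polynomial.eval_map_algebraMap] at hp0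
  · rintro ⟨q, hq0, hqmem, hqe⟩
    obtain ⟨p, hp⟩ := restrict_poly k q hqmem
    refine ⟨p, ?_, ?_⟩
    · rintro rfl; rw [Polynomial.map_zero] at hp; exact hq0 hp.symm
    · rw [← Polynomial.eval_map_algebraMap, hp]; exact hqe
theorem AlgDep.mono {k₁ k₂ : Subfield L} (h : k₁ ≤ k₂) {ι : Type*} {y : ι → L} :
    AlgDep k₁ y → AlgDep k₂ y := by
  rintro ⟨p, h0, hc, he⟩; exact ⟨p, h0, fun d => h (hc d), he⟩

theorem AlgOver.mono {k₁ k₂ : Subfield L} (h : k₁ ≤ k₂) {z : L} :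
    AlgOver k₁ z → AlgOver k₂ z := by
  rintro ⟨p, h0, hc, he⟩; exact ⟨p, h0, fun i => h (hc i), he⟩

theorem le_adj (k : Subfield L) (X : Set L) : k ≤ adj k X := by
  intro x hx; exact Subfield.subset_closure (Or.inl hx)

theorem subset_adj (k : Subfield L) (X : Set L) : X ⊆ ↑(adj k X) :=
  fun x hx => Subfield.subset_closure (Or.inr hx)

theorem adj_le {k K : Subfield L} {X : Set L} (hk : k ≤ K) (hX : X ⊆ ↑K) : adj k X ≤ K :=
  Subfield.closure_le.mpr (Set.union_subset hk hX)

theorem adj_mono_set (k : Subfield L) {X Y : Set L} (h : X ⊆ Y) : adj k X ≤ adj k Y :=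
  Subfield.closure_mono (Set.union_subset_union_right _ h)

theorem adj_mono_base {k₁ k₂ : Subfield L} (h : k₁ ≤ k₂) (X : Set L) : adj k₁ X ≤ adj k₂ X :=
  Subfield.closure_mono (Set.union_subset_union_left _ h)

theorem adj_empty (k : Subfield L) : adj k ∅ = k := by
  rw [adj, Set.union_empty, Subfield.closure_eq]

theorem adj_adj (k : Subfield L) (X Y : Set L) : adj (adj k X) Y = adj k (X ∪ Y) := by
  refine le_antisymm (adj_le ?_ ?_) (adj_le ?_ ?_)
  · exact adj_le (le_adj _ _) ((Set.subset_union_left).trans (subset_adj _ _))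
  · exact (Set.subset_union_right).trans (subset_adj _ _)
  · exact (le_adj k X).trans (le_adj _ _)
  · exact Set.union_subset ((subset_adj k X).trans (le_adj _ _))
      (subset_adj _ _)

theorem adj_comm (k : Subfield L) (X Y : Set L) : adj (adj k X) Y = adj (adj k Y) X := by
  rw [adj_adj, adj_adj, Set.union_comm]

theorem AlgDep.reindex {k : Subfield L} {ι ι' : Type*} {w : ι → L} {f : ι' → ι}
    (hf : Function.Injective f) (h : AlgDep k (w ∘ f)) : AlgDep k w := by
  classical
  obtain ⟨p, h0, hc, he⟩ := h
  refine ⟨MvPolynomial.rename f p, ?_, ?_, ?_⟩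
  · exact fun hz => h0 ((MvPolynomial.rename_injective f hf) (by simpa using hz))
  · intro d
    by_cases hd : MvPolynomial.coeff d (MvPolynomial.rename f p) = 0
    · rw [hd]; exact Subfield.zero_mem _
    · obtain ⟨u, hu, -⟩ := MvPolynomial.coeff_rename_ne_zero f p d hd
      rw [← hu, MvPolynomial.coeff_rename_mapDomain f hf]
      exact hc u
  · rw [MvPolynomial.eval_rename]; exact he

/-- A subfield containing `k` as a `k`-subalgebra. -/
def subalgebraOf {k K : Subfield L} (h : k ≤ K) : Subalgebra k L :=
  { K.toSubring with
    algebraMap_mem' := fun r => h r.2 }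

theorem mem_subalgebraOf {k K : Subfield L} (h : k ≤ K) {x : L} :
    x ∈ subalgebraOf h ↔ x ∈ K := Iff.rfl

theorem adjoin_subset_adj (k : Subfield L) (X : Set L) :
    (Algebra.adjoin k X : Set L) ⊆ ↑(adj k X) := by
  have : Algebra.adjoin k X ≤ subalgebraOf (le_adj k X) :=
    Algebra.adjoin_le (fun x hx => (mem_subalgebraOf _).mpr (subset_adj k X hx))
  exact fun x hx => this hx

theorem algOver_of_isAlgebraic_adjoin {k : Subfield L} {X : Set L} {z : L}
    (h : IsAlgebraic (Algebra.adjoin k X) z) : AlgOver (adj k X) z := by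
  obtain ⟨p, hpne, hp0⟩ := h
  refine ⟨p.map (algebraMap (Algebra.adjoin k X) L), ?_, ?_, ?_⟩
  · simpa using (Polynomial.map_injective _ Subtype.val_injective).ne hpne
  · intro i
    rw [Polynomial.coeff_map]
    exact adjoin_subset_adj k X (p.coeff i).2
  · rwa [← Polynomial.eval_map_algebraMap] at hp0

theorem isAlgebraic_of_coeffs {F : Subfield L} (E : IntermediateField F L) {z : L}
    (q : Polynomial L) (hq0 : q ≠ 0) (hqc : ∀ i, q.coeff i ∈ E)
    (hqe : Polynomial.eval z q = 0) : IsAlgebraic E z := by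
  classical
  have hmap : Polynomial.map (algebraMap E L)
      (∑ i ∈ q.support, Polynomial.monomial i (⟨q.coeff i, hqc i⟩ : E)) = q := by
    rw [Polynomial.map_sum]
    simp only [Polynomial.map_monomial]
    exact (q.as_sum_support).symm
  refine ⟨∑ i ∈ q.support, Polynomial.monomial i (⟨q.coeff i, hqc i⟩ : E), ?_, ?_⟩
  · intro h; rw [h, Polynomial.map_zero] at hmap; exact hq0 hmap.symm
  · rw [← Polynomial.eval_map_algebraMap, hmap]; exact hqe

theorem algDep_ring_coeffs {k : Subfield L} {X : Set L} {ι : Type*} {y : ι → L}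
    (h : AlgDep (adj k X) y) :
    ∃ q : MvPolynomial ι L, q ≠ 0 ∧ (∀ d, MvPolynomial.coeff d q ∈ Subring.closure (↑k ∪ X)) ∧
      MvPolynomial.eval y q = 0 := by
  classical
  obtain ⟨p, hp0, hpc, hpe⟩ := h
  have key : ∀ d : ι →₀ ℕ, ∃ u v : L, u ∈ Subring.closure (↑k ∪ X) ∧
      v ∈ Subring.closure (↑k ∪ X) ∧ v ≠ 0 ∧ MvPolynomial.coeff d p = u / v := by
    intro d
    by_cases hd : MvPolynomial.coeff d p = 0
    · exact ⟨0, 1, Subring.zero_mem _, Subring.one_mem _, one_ne_zero, by simp [hd]⟩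
    · obtain ⟨u, hu, v, hv, huv⟩ := Subfield.mem_closure_iff.mp (hpc d)
      have hvne : v ≠ 0 := by
        rintro rfl
        rw [div_zero] at huv
        exact hd huv.symm
      exact ⟨u, v, hu, hv, hvne, huv.symm⟩
  choose u v hu hv hvne heq using key
  set D : L := ∏ d ∈ p.support, v d with hD
  have hDne : D ≠ 0 := Finset.prod_ne_zero_iff.mpr fun d _ => hvne d
  have hDmem : ∀ d ∈ p.support, D / v d ∈ Subring.closure (↑k ∪ X) := by
    intro d hd
    have h2 : D / v d = ∏ e ∈ p.support.erase d, v e := by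
      rw [hD, ← Finset.mul_prod_erase _ _ hd, mul_comm, mul_div_assoc, div_self (hvne d), mul_one]
    rw [h2]
    exact Subring.prod_mem _ fun e _ => hv e
  refine ⟨MvPolynomial.C D * p, ?_, ?_, ?_⟩
  · exact mul_ne_zero (by simpa using hDne) hp0
  · intro d
    rw [MvPolynomial.coeff_C_mul]
    by_cases hd : d ∈ p.support
    · have h3 : D * MvPolynomial.coeff d p = (D / v d) * u d := by
        rw [heq d, div_mul_eq_mul_div, mul_div_assoc]
      rw [h3]
      exact Subring.mul_mem _ (hDmem d hd) (hu d)
    · rw [MvPolynomial.notMem_support_iff.mp hd, mul_zero]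
      exact Subring.zero_mem _
  · rw [map_mul, hpe, mul_zero]

theorem not_algDep_sum {ι κ : Type*} {k : Subfield L} {x : ι ⊕ κ → L}
    (hx : AlgebraicIndependent k x) :
    ¬ AlgDep (adj k (Set.range (x ∘ Sum.inl))) (x ∘ Sum.inr) := by
  classical
  intro h
  obtain ⟨q, hq0, hqc, hqe⟩ := algDep_ring_coeffs h
  set φ : MvPolynomial (ι ⊕ κ) k →ₐ[k] MvPolynomial κ L :=
    MvPolynomial.aeval (Sum.elim (fun i => MvPolynomial.C (x (Sum.inl i)))
      (fun j => MvPolynomial.X j)) with hφ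
  have hC : ∀ c ∈ Subring.closure (↑k ∪ Set.range (x ∘ Sum.inl)),
      MvPolynomial.C c ∈ φ.range := by
    intro c hc
    have hsub : Subring.closure (↑k ∪ Set.range (x ∘ Sum.inl)) ≤
        (φ.range.toSubring).comap (MvPolynomial.C : L →+* MvPolynomial κ L) := by
      apply Subring.closure_le.mpr
      rintro c (hc | ⟨i, rfl⟩) <;> refine Subring.mem_comap.mpr ((AlgHom.mem_range _).mpr ?_)
      · refine ⟨MvPolynomial.C (⟨c, hc⟩ : k), ?_⟩
        rw [hφ, MvPolynomial.aeval_C]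
        rfl
      · exact ⟨MvPolynomial.X (Sum.inl i), by rw [hφ, MvPolynomial.aeval_X, Sum.elim_inl]; rfl⟩
    exact Subring.mem_comap.mp (hsub hc)
  have hXmem : ∀ j : κ, (MvPolynomial.X j : MvPolynomial κ L) ∈ φ.range :=
    fun j => (AlgHom.mem_range _).mpr ⟨MvPolynomial.X (Sum.inr j),
      by rw [hφ, MvPolynomial.aeval_X, Sum.elim_inr]⟩
  have hqmem : q ∈ φ.range := by
    rw [q.as_sum]
    refine Subalgebra.sum_mem _ fun d _ => ?_
    rw [MvPolynomial.monomial_eq]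
    refine Subalgebra.mul_mem _ (hC _ (hqc d)) ?_
    refine Subalgebra.prod_mem _ fun n _ => Subalgebra.pow_mem _ (hXmem n) _
  obtain ⟨P, hP⟩ := (AlgHom.mem_range _).mp hqmem
  have hcomp : (MvPolynomial.eval (x ∘ Sum.inr)).comp φ.toRingHom
      = (MvPolynomial.aeval (R := k) x).toRingHom := by
    apply MvPolynomial.ringHom_ext
    · intro r
      simp [hφ]
    · rintro (i | j) <;> simp [hφ]
  have hPz : MvPolynomial.aeval (R := k) x P = 0 := by
    have := congrArg (fun f : MvPolynomial (ι ⊕ κ) k →+* L => f P) hcomp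
    simp only [RingHom.coe_comp, Function.comp_apply] at this
    show (MvPolynomial.aeval (R := k) x).toRingHom P = 0
    rw [← this]
    show MvPolynomial.eval (x ∘ Sum.inr) (φ P) = 0
    rw [hP]; exact hqe
  have : P = 0 := algebraicIndependent_iff.mp hx P hPz
  rw [this, map_zero] at hP
  exact hq0 hP.symm
end DTAux
section part4
namespace DTAux
variable {L : Type*} [Field L]

theorem algebraicIndependent_of_not_algDep {k : Subfield L} {ι : Type*} {y : ι → L}
    (h : ¬ AlgDep k y) : AlgebraicIndependent k y := by
  by_contra hc
  exact h ((not_algebraicIndependent_iff_algDep k y).mp hc)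

/-- Exchange: if `y` is independent over `k` but dependent over `k(a)`, then `a` is
algebraic over `k(range y)`. -/
theorem exchange_one {k : Subfield L} {κ : Type*} {y : κ → L}
    (hy : AlgebraicIndependent k y) {a : L}
    (ha : ¬ AlgOver (adj k (Set.range y)) a) : ¬ AlgDep (adj k ({a} : Set L)) y := by
  have htr : Transcendental (Algebra.adjoin k (Set.range y)) a := by
    intro halg
    exact ha (algOver_of_isAlgebraic_adjoin halg)
  have hopt : AlgebraicIndependent k (fun o : Option κ => o.elim a y) :=
    (hy.option_iff_transcendental a).mpr htr
  have hinj : Function.Injective (Sum.elim (fun _ : Unit => (none : Option κ)) some) := by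
    rintro (u | i) (v | j) h
    · cases u; cases v; rfl
    · simp at h
    · simp at h
    · simp at h; rw [h]
  have hx : AlgebraicIndependent k
      ((fun o : Option κ => o.elim a y) ∘ Sum.elim (fun _ : Unit => (none : Option κ)) some) :=
    hopt.comp _ hinj
  have := not_algDep_sum hx
  have hrange : Set.range (((fun o : Option κ => o.elim a y) ∘
      Sum.elim (fun _ : Unit => (none : Option κ)) some) ∘ Sum.inl) = ({a} : Set L) := by
    ext z
    constructor
    · rintro ⟨u, rfl⟩; exact Set.mem_singleton_iff.mpr rfl
    · intro hz
      rw [Set.mem_singleton_iff] at hz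
      subst hz
      exact ⟨(), rfl⟩
  rw [hrange] at this
  exact this

/-- Each element of an independent family is transcendental over the field generated by
the preceding ones. -/
theorem prefix_transcendental {k : Subfield L} {y : ℕ → L}
    (hy : AlgebraicIndependent k y) (n : ℕ) :
    ¬ AlgOver (adj k (y '' Set.Iio n)) (y n) := by
  intro hbad
  have hginj : Function.Injective (Sum.elim (Fin.val : Fin n → ℕ) (fun m : ℕ => n + m)) := by
    rintro (i | i) (j | j) h <;> simp only [Sum.elim_inl, Sum.elim_inr] at h
    · exact congrArg Sum.inl (Fin.ext h)
    · exact absurd h (by have := i.2; omega)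
    · exact absurd h (by have := j.2; omega)
    · exact congrArg Sum.inr (by omega)
  have hx : AlgebraicIndependent k (y ∘ Sum.elim (Fin.val : Fin n → ℕ) (fun m : ℕ => n + m)) :=
    hy.comp _ hginj
  have hns := not_algDep_sum hx
  have hrange : Set.range ((y ∘ Sum.elim (Fin.val : Fin n → ℕ) (fun m : ℕ => n + m)) ∘ Sum.inl)
      = y '' Set.Iio n := by
    ext z
    constructor
    · rintro ⟨i, rfl⟩; exact ⟨i, i.2, rfl⟩
    · rintro ⟨m, hm, rfl⟩; exact ⟨⟨m, hm⟩, rfl⟩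
  rw [hrange] at hns
  have hindep : AlgebraicIndependent (adj k (y '' Set.Iio n))
      ((y ∘ Sum.elim (Fin.val : Fin n → ℕ) (fun m : ℕ => n + m)) ∘ Sum.inr) :=
    algebraicIndependent_of_not_algDep hns
  have := hindep.transcendental 0
  exact this ((isAlgebraic_iff_algOver _ _).mpr hbad)

/-- Extending an independent prefix by a transcendental element. -/
theorem extend_prefix {k : Subfield L} {n : ℕ} {y : ℕ → L}
    (h : AlgebraicIndependent k (fun i : Fin n => y i))
    (ht : ¬ AlgOver (adj k (y '' Set.Iio n)) (y n)) :
    AlgebraicIndependent k (fun i : Fin (n + 1) => y i) := by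
  have hrange : Set.range (fun i : Fin n => y i) = y '' Set.Iio n := by
    ext z
    constructor
    · rintro ⟨i, rfl⟩; exact ⟨i, i.2, rfl⟩
    · rintro ⟨m, hm, rfl⟩; exact ⟨⟨m, hm⟩, rfl⟩
  have htr : Transcendental (Algebra.adjoin k (Set.range fun i : Fin n => y i)) (y n) := by
    intro halg
    rw [hrange] at halg
    exact ht (algOver_of_isAlgebraic_adjoin halg)
  have hopt : AlgebraicIndependent k
      (fun o : Option (Fin n) => o.elim (y n) (fun i : Fin n => y i)) :=
    (h.option_iff_transcendental (y n)).mpr htr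
  set e : Fin (n + 1) → Option (Fin n) :=
    fun i => if h : (i : ℕ) < n then some ⟨i, h⟩ else none with he
  have heinj : Function.Injective e := by
    intro i j hij
    rw [he] at hij
    by_cases hi : (i : ℕ) < n <;> by_cases hj : (j : ℕ) < n <;>
      simp only [hi, hj, dif_pos, dif_neg, not_false_iff] at hij
    · simp only [Option.some.injEq, Fin.mk.injEq] at hij
      exact Fin.ext hij
    · simp at hij
    · simp at hij
    · apply Fin.ext; omega
  have hcomp : ((fun o : Option (Fin n) => o.elim (y n) (fun i : Fin n => y i)) ∘ e)
      = fun i : Fin (n + 1) => y i := by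
    funext i
    by_cases hi : (i : ℕ) < n
    · simp [he, hi]
    · have : (i : ℕ) = n := by omega
      simp [he, hi, this]
  have := hopt.comp e heinj
  rwa [hcomp] at this

/-- Finite character for ℕ-indexed families. -/
theorem indep_of_prefixes {k : Subfield L} {y : ℕ → L}
    (h : ∀ n, AlgebraicIndependent k (fun i : Fin n => y i)) :
    AlgebraicIndependent k y := by
  classical
  rw [algebraicIndependent_iff]
  intro p hp
  obtain ⟨n, f, hfinj, q, rfl⟩ := MvPolynomial.exists_fin_rename p
  suffices hq : q = 0 by rw [hq, map_zero]
  set N : ℕ := (Finset.univ.sup fun i : Fin n => f i) + 1 with hN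
  have hfN : ∀ i, f i < N := by
    intro i
    have : f i ≤ Finset.univ.sup fun i : Fin n => f i :=
      Finset.le_sup (Finset.mem_univ i)
    omega
  set g : Fin n → Fin N := fun i => ⟨f i, hfN i⟩ with hg
  have hginj : Function.Injective g := by
    intro i j hij
    exact hfinj (congrArg Fin.val hij)
  have hyf : AlgebraicIndependent k (y ∘ f) := by
    have := (h N).comp g hginj
    have hcomp : (fun i : Fin N => y i) ∘ g = y ∘ f := rfl
    rwa [hcomp] at this
  rw [MvPolynomial.aeval_rename] at hp
  exact algebraicIndependent_iff.mp hyf q hp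

/-- Transitivity: algebraic over `k(a)` with `a` algebraic over `k` implies algebraic over `k`. -/
theorem algOver_trans {k : Subfield L} {a z : L} (ha : AlgOver k a)
    (hz : AlgOver (adj k ({a} : Set L)) z) : AlgOver k z := by
  rw [← isAlgebraic_iff_algOver] at ha ⊢
  have hInt : IsIntegral k a := ha.isIntegral
  set E := IntermediateField.adjoin k ({a} : Set L) with hE
  have hfd : FiniteDimensional k E := IntermediateField.adjoin.finiteDimensional hInt
  have hset : (↑(adj k ({a} : Set L)) : Set L) ⊆ (E : Set L) := by
    have hle : adj k ({a} : Set L) ≤ E.toSubfield := by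
      apply Subfield.closure_le.mpr
      rintro x (hx | hx)
      · exact E.algebraMap_mem ⟨x, hx⟩
      · rw [Set.mem_singleton_iff] at hx
        subst hx
        exact IntermediateField.subset_adjoin _ _ rfl
    exact hle
  obtain ⟨q, hq0, hqc, hqe⟩ := hz
  have hzE : IsAlgebraic E z := isAlgebraic_of_coeffs E q hq0 (fun i => hset (hqc i)) hqe
  have hint2 : IsIntegral E z := hzE.isIntegral
  haveI : Algebra.IsIntegral k E := Algebra.IsIntegral.of_finite _ _
  exact (isIntegral_trans z hint2).isAlgebraic

/-- Dependence descends along a simple algebraic extension. -/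
theorem not_algDep_adj_singleton {k : Subfield L} {a : L} (ha : AlgOver k a) {y : ℕ → L}
    (hy : ¬ AlgDep k y) : ¬ AlgDep (adj k ({a} : Set L)) y := by
  have hyi : AlgebraicIndependent k y := algebraicIndependent_of_not_algDep hy
  rw [← not_algebraicIndependent_iff_algDep, not_not]
  apply indep_of_prefixes
  intro n
  induction n with
  | zero => exact algebraicIndependent_empty_type
  | succ n ih =>
      apply extend_prefix ih
      intro hbad
      have hEq : adj (adj k ({a} : Set L)) (y '' Set.Iio n)
          = adj (adj k (y '' Set.Iio n)) ({a} : Set L) := adj_comm _ _ _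
      rw [hEq] at hbad
      have ha' : AlgOver (adj k (y '' Set.Iio n)) a := ha.mono (le_adj _ _)
      exact prefix_transcendental hyi n (algOver_trans ha' hbad)
end DTAux
end part4
section part5
namespace DTAux
variable {L : Type*} [Field L]

theorem exchange_finset {k : Subfield L} {y : ℕ → L} (hy : ¬ AlgDep k y)
    (A : Finset L) (hdep : AlgDep (adj k ↑A) y) :
    ∃ a ∈ A, AlgOver (adj k (((↑A : Set L) \ {a}) ∪ Set.range y)) a := by
  classical
  induction A using Finset.strongInduction with
  | _ A ih =>
    by_cases hmin : ∃ a ∈ A, AlgDep (adj k ↑(A.erase a)) y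
    · obtain ⟨a, haA, hdep'⟩ := hmin
      obtain ⟨b, hb, hbover⟩ := ih (A.erase a) (Finset.erase_ssubset haA) hdep'
      refine ⟨b, Finset.mem_of_mem_erase hb, ?_⟩
      apply hbover.mono
      apply adj_mono_set
      apply Set.union_subset_union_left
      rw [Finset.coe_erase]
      exact Set.diff_subset_diff_left (by exact_mod_cast Finset.erase_subset a A)
    · have hA : A.Nonempty := by
        by_contra h
        rw [Finset.not_nonempty_iff_eq_empty] at h
        subst h
        rw [Finset.coe_empty, adj_empty] at hdep
        exact hy hdep
      obtain ⟨a, haA⟩ := hA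
      push_neg at hmin
      have hnd : ¬ AlgDep (adj k ↑(A.erase a)) y := hmin a haA
      have hyi : AlgebraicIndependent (adj k ↑(A.erase a)) y :=
        algebraicIndependent_of_not_algDep hnd
      have hcoe : (↑(A.erase a) : Set L) ∪ {a} = ↑A := by
        rw [Finset.coe_erase]
        rw [Set.diff_union_self]
        exact (Set.union_eq_self_of_subset_right (by simpa using haA))
      have hEq : adj k ↑A = adj (adj k ↑(A.erase a)) ({a} : Set L) := by
        rw [adj_adj, hcoe]
      rw [hEq] at hdep
      refine ⟨a, haA, ?_⟩
      by_contra hov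
      have hov' : ¬ AlgOver (adj (adj k ↑(A.erase a)) (Set.range y)) a := by
        rw [adj_adj, Finset.coe_erase]
        exact hov
      exact exchange_one hyi hov' hdep

theorem bad_set_finite (n : ℕ) {ι : Type*} (k : Subfield L) (y : ι → ℕ → L)
    (hy : AlgebraicIndependent k (fun p : ι × ℕ => y p.1 p.2)) (A : Finset L)
    (hA : A.card ≤ n) : {i : ι | AlgDep (adj k ↑A) (y i)}.Finite := by
  classical
  induction n generalizing ι k y hy A with
  | zero =>
      rw [Nat.le_zero, Finset.card_eq_zero] at hA
      subst hA
      have : {i : ι | AlgDep (adj k ↑(∅ : Finset L)) (y i)} = ∅ := by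
        ext i
        simp only [Set.mem_setOf_eq, Set.mem_empty_iff_false, iff_false]
        rw [Finset.coe_empty, adj_empty]
        intro hdep
        have hsub : AlgebraicIndependent k (y i) :=
          hy.comp (fun m : ℕ => ((i, m) : ι × ℕ)) (fun m m' h => by simpa using h)
        exact (not_algebraicIndependent_iff_algDep k (y i)).mpr hdep hsub
      rw [this]
      exact Set.finite_empty
  | succ n ih =>
      by_cases hbad : {i : ι | AlgDep (adj k ↑A) (y i)}.Nonempty
      swap
      · rw [Set.not_nonempty_iff_eq_empty] at hbad
        rw [hbad]; exact Set.finite_empty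
      obtain ⟨i₀, hi₀⟩ := hbad
      have hyi0 : ¬ AlgDep k (y i₀) := by
        intro hdep
        have hsub : AlgebraicIndependent k (y i₀) :=
          hy.comp (fun m : ℕ => ((i₀, m) : ι × ℕ)) (fun m m' h => by simpa using h)
        exact (not_algebraicIndependent_iff_algDep k (y i₀)).mpr hdep hsub
      obtain ⟨a, haA, hov⟩ := exchange_finset hyi0 A hi₀
      set k' := adj k (Set.range (y i₀)) with hk'
      -- independence of the remaining family over k'
      have hginj : Function.Injective
          (Sum.elim (fun m : ℕ => ((i₀, m) : ι × ℕ))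
            (fun p : {i : ι // i ≠ i₀} × ℕ => ((p.1.1, p.2) : ι × ℕ))) := by
        rintro (m | ⟨⟨j, hj⟩, m⟩) (m' | ⟨⟨j', hj'⟩, m'⟩) h <;>
            rw [Prod.ext_iff] at h <;> obtain ⟨h1, h2⟩ := h <;>
            simp only [Sum.elim_inl, Sum.elim_inr] at h1 h2
        · rw [h2]
        · exact absurd h1.symm hj'
        · exact absurd h1 hj
        · subst h1
          rw [h2]
      have hx := hy.comp _ hginj
      have hy' : AlgebraicIndependent k'
          (fun p : {i : ι // i ≠ i₀} × ℕ => y p.1.1 p.2) := by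
        have hns := not_algDep_sum hx
        have hrange : Set.range (((fun p : ι × ℕ => y p.1 p.2) ∘
            Sum.elim (fun m : ℕ => ((i₀, m) : ι × ℕ))
              (fun p : {i : ι // i ≠ i₀} × ℕ => ((p.1.1, p.2) : ι × ℕ))) ∘ Sum.inl)
            = Set.range (y i₀) := rfl
        rw [hrange] at hns
        exact algebraicIndependent_of_not_algDep hns
      have hcard : (A.erase a).card ≤ n := by
        have := Finset.card_erase_of_mem haA
        omega
      have hfin := ih (k := k') (y := fun j : {i : ι // i ≠ i₀} => y j.1) hy' (A.erase a) hcard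
      -- a is algebraic over adj k' (A.erase a)
      have hov' : AlgOver (adj k' ↑(A.erase a)) a := by
        rw [hk', adj_adj, Set.union_comm, Finset.coe_erase]
        exact hov
      have hcoe : (↑(A.erase a) : Set L) ∪ {a} = ↑A := by
        rw [Finset.coe_erase, Set.diff_union_self]
        exact (Set.union_eq_self_of_subset_right (by simpa using haA))
      have hsubset : {i : ι | AlgDep (adj k ↑A) (y i)} ⊆
          {i₀} ∪ (Subtype.val '' {j : {i : ι // i ≠ i₀} | AlgDep (adj k' ↑(A.erase a)) (y j.1)}) := by
        intro i hi
        by_cases hii : i = i₀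
        · exact Or.inl hii
        · refine Or.inr ⟨⟨i, hii⟩, ?_, rfl⟩
          have h1 : AlgDep (adj k' ↑A) (y i) :=
            hi.mono (adj_mono_base (le_adj _ _) _)
          have h2 : AlgDep (adj (adj k' ↑(A.erase a)) ({a} : Set L)) (y i) := by
            rwa [adj_adj, hcoe]
          by_contra hnot
          exact not_algDep_adj_singleton hov' hnot h2
      exact Set.Finite.subset ((Set.finite_singleton i₀).union (hfin.image _)) hsubset

end DTAux
end part5
section part6
namespace DTAux
variable {L : Type*} [Field L]

theorem mem_closure_finite {s : Set L} {z : L} (hz : z ∈ Subfield.closure s) :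
    ∃ t : Set L, t ⊆ s ∧ t.Finite ∧ z ∈ Subfield.closure t := by
  induction hz using Subfield.closure_induction with
  | mem x hx =>
      exact ⟨{x}, Set.singleton_subset_iff.mpr hx, Set.finite_singleton x,
        Subfield.subset_closure rfl⟩
  | one => exact ⟨∅, Set.empty_subset s, Set.finite_empty, Subfield.one_mem _⟩
  | add x y hx hy ihx ihy =>
      obtain ⟨t1, ht1s, ht1f, ht1⟩ := ihx
      obtain ⟨t2, ht2s, ht2f, ht2⟩ := ihy
      exact ⟨t1 ∪ t2, Set.union_subset ht1s ht2s, ht1f.union ht2f,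
        Subfield.add_mem _ (Subfield.closure_mono Set.subset_union_left ht1)
          (Subfield.closure_mono Set.subset_union_right ht2)⟩
  | neg x hx ihx =>
      obtain ⟨t1, ht1s, ht1f, ht1⟩ := ihx
      exact ⟨t1, ht1s, ht1f, Subfield.neg_mem _ ht1⟩
  | inv x hx ihx =>
      obtain ⟨t1, ht1s, ht1f, ht1⟩ := ihx
      exact ⟨t1, ht1s, ht1f, Subfield.inv_mem _ ht1⟩
  | mul x y hx hy ihx ihy =>
      obtain ⟨t1, ht1s, ht1f, ht1⟩ := ihx
      obtain ⟨t2, ht2s, ht2f, ht2⟩ := ihy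
      exact ⟨t1 ∪ t2, Set.union_subset ht1s ht2s, ht1f.union ht2f,
        Subfield.mul_mem _ (Subfield.closure_mono Set.subset_union_left ht1)
          (Subfield.closure_mono Set.subset_union_right ht2)⟩

theorem mem_adj_finite {k : Subfield L} {X : Set L} {z : L} (hz : z ∈ adj k X) :
    ∃ B : Set L, B ⊆ X ∧ B.Finite ∧ z ∈ adj k B := by
  obtain ⟨t, hts, htf, ht⟩ := mem_closure_finite hz
  refine ⟨t ∩ X, Set.inter_subset_right, htf.inter_of_left X, ?_⟩
  have hsub : t ⊆ ↑k ∪ (t ∩ X) := by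
    intro x hx
    rcases hts hx with hk | hX
    · exact Or.inl hk
    · exact Or.inr ⟨hx, hX⟩
  exact Subfield.closure_mono hsub ht

end DTAux
end part6

theorem uncountably_many_diff_transcendental'
    (L : Type*) [Field L] (δ : L → L)
    (F₀ F : Subfield L)
    (hunc : ∃ T : Set L, T ⊆ F ∧ ¬ T.Countable ∧
      AlgebraicIndependent F₀ (fun p : T × ℕ => δ^[p.2] (p.1 : L)))
    (S : Set L) (hS : S.Countable) :
    ¬ Set.Countable {c : L | c ∈ F ∧
      AlgebraicIndependent (Subfield.closure (↑F₀ ∪ {x | ∃ s ∈ S, ∃ m : ℕ, δ^[m] s = x}))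
        (fun i : ℕ => δ^[i] c)} := by
  classical
  obtain ⟨T, hTF, hTunc, hTind⟩ := hunc
  set A : Set L := {x | ∃ s ∈ S, ∃ m : ℕ, δ^[m] s = x} with hA
  have hAc : A.Countable := by
    have himg : A = (fun p : L × ℕ => δ^[p.2] p.1) '' (S ×ˢ (Set.univ : Set ℕ)) := by
      ext x
      constructor
      · rintro ⟨s, hs, m, rfl⟩
        exact ⟨(s, m), ⟨hs, trivial⟩, rfl⟩
      · rintro ⟨⟨s, m⟩, ⟨hs, -⟩, rfl⟩
        exact ⟨s, hs, m, rfl⟩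
    rw [himg]
    exact (hS.prod Set.countable_univ).image _
  intro hcount
  apply hTunc
  set 𝒜 : Set (Set L) := {B | B.Finite ∧ B ⊆ A} with h𝒜
  have h𝒜c : 𝒜.Countable := Set.countable_setOf_finite_subset hAc
  have hbadfin : ∀ B ∈ 𝒜,
      {t : T | DTAux.AlgDep (DTAux.adj F₀ B) (fun i : ℕ => δ^[i] (t : L))}.Finite := by
    rintro B ⟨hBfin, hBA⟩
    have hfin := DTAux.bad_set_finite hBfin.toFinset.card F₀
      (fun (t : T) (m : ℕ) => δ^[m] (t : L)) hTind hBfin.toFinset le_rfl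
    rwa [hBfin.coe_toFinset] at hfin
  have hsub : T ⊆ {c : L | c ∈ F ∧
      AlgebraicIndependent (Subfield.closure (↑F₀ ∪ A)) (fun i : ℕ => δ^[i] c)}
      ∪ ⋃ B ∈ 𝒜, Subtype.val ''
        {t : T | DTAux.AlgDep (DTAux.adj F₀ B) (fun i : ℕ => δ^[i] (t : L))} := by
    intro c hc
    by_cases hind : AlgebraicIndependent (Subfield.closure (↑F₀ ∪ A)) (fun i : ℕ => δ^[i] c)
    · exact Or.inl ⟨hTF hc, hind⟩
    · right
      have hdep : DTAux.AlgDep (DTAux.adj F₀ A) (fun i : ℕ => δ^[i] c) :=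
        (DTAux.not_algebraicIndependent_iff_algDep _ _).mp hind
      obtain ⟨p, hp0, hpc, hpe⟩ := hdep
      have hBd : ∀ d : ℕ →₀ ℕ, ∃ B : Set L, B ⊆ A ∧ B.Finite ∧
          MvPolynomial.coeff d p ∈ DTAux.adj F₀ B :=
        fun d => DTAux.mem_adj_finite (hpc d)
      choose Bf hBfsub hBffin hBfmem using hBd
      set B : Set L := ⋃ d ∈ (↑p.support : Set (ℕ →₀ ℕ)), Bf d with hB
      have hBA : B ⊆ A := Set.iUnion₂_subset fun d _ => hBfsub d
      have hBfin : B.Finite := Set.Finite.biUnion p.support.finite_toSet fun d _ => hBffin d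
      have hdepB : DTAux.AlgDep (DTAux.adj F₀ B) (fun i : ℕ => δ^[i] c) := by
        refine ⟨p, hp0, ?_, hpe⟩
        intro d
        by_cases hd : d ∈ p.support
        · exact DTAux.adj_mono_set F₀
            (Set.subset_biUnion_of_mem (u := Bf) (Finset.mem_coe.mpr hd)) (hBfmem d)
        · rw [MvPolynomial.notMem_support_iff.mp hd]
          exact Subfield.zero_mem _
      refine Set.mem_biUnion (show B ∈ 𝒜 from ⟨hBfin, hBA⟩) ?_
      exact ⟨⟨c, hc⟩, hdepB, rfl⟩
  refine Set.Countable.mono hsub ?_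
  refine Set.Countable.union hcount ?_
  exact Set.Countable.biUnion h𝒜c fun B hB => ((hbadfin B hB).image _).countable


/-- Let `F₀ ⊆ F ⊆ L` be differential fields of characteristic zero.  If `F` contains an
uncountable subset that is differentially algebraically independent over `F₀`, then for
every countable subset `S ⊆ L` there are uncountably many `c ∈ F` that are
differentially transcendental over `F₀⟨S⟩`. -/
theorem uncountably_many_diff_transcendental
    (L : Type*) [Field L] [CharZero L] (δ : L → L)
    (hδadd : ∀ a b : L, δ (a + b) = δ a + δ b)
    (hδmul : ∀ a b : L, δ (a * b) = a * δ b + δ a * b)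
    (F₀ F : Subfield L)
    (hF₀δ : ∀ x ∈ F₀, δ x ∈ F₀) (hFδ : ∀ x ∈ F, δ x ∈ F)
    (hF₀F : F₀ ≤ F)
    (hunc : ∃ T : Set L, T ⊆ F ∧ ¬ T.Countable ∧
      AlgebraicIndependent F₀ (fun p : T × ℕ => δ^[p.2] (p.1 : L)))
    (S : Set L) (hS : S.Countable) :
    ¬ Set.Countable {c : L | c ∈ F ∧
      AlgebraicIndependent (diffAdjoin δ F₀ S) (fun i : ℕ => δ^[i] c)} := by
  exact uncountably_many_diff_transcendental' L δ F₀ F hunc S hS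
end

section
/- Let n ≥ 1, let E ⊆ Ω be differential fields of characteristic zero, let b₀, …, b_{n−1} ∈ E, and let c ∈ Ω be a nonzero element satisfying δ(c) = (1/n)·b_{n−1}·c. Then there exist elements c₀, …, c_{n−2} ∈ E such that every y ∈ Ω satisfying y^{(n)} + b_{n−1}·y^{(n−1)} + ⋯ + b₁·y^{(1)} + b₀·y = 0 also satisfies (cy)^{(n)} + c_{n−2}·(cy)^{(n−2)} + ⋯ + c₁·(cy)^{(1)} + c₀·(cy) = 0; that is, the exponential product transformation z = c·y eliminates the coefficient of z^{(n−1)} and produces an equation whose remaining coefficients lie in E. -/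
/-- Coefficients in the expansion of `δ^[k] (u * w)` where `δ u = β * u`. -/
noncomputable def abar {Ω : Type*} [Field Ω] (δ : Ω → Ω) (β : Ω) : ℕ → ℕ → Ω
  | 0, 0 => 1
  | 0, _ + 1 => 0
  | k + 1, 0 => δ (abar δ β k 0) + β * abar δ β k 0
  | k + 1, j + 1 => δ (abar δ β k (j + 1)) + β * abar δ β k (j + 1) + abar δ β k j

section aux
variable {Ω : Type*} [Field Ω] (δ : Ω → Ω) (β : Ω)

lemma abar_zero_of_lt (h0 : δ 0 = 0) : ∀ k j, k < j → abar δ β k j = 0 := by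
  intro k
  induction k with
  | zero => intro j hj; obtain ⟨j, rfl⟩ := Nat.exists_eq_add_of_lt hj; simp [abar]
  | succ k ih =>
      intro j hj
      obtain ⟨j, rfl⟩ : ∃ m, j = m + 1 := ⟨j - 1, by omega⟩
      rw [abar, ih (j+1) (by omega), ih j (by omega), h0]; ring

lemma abar_diag (h0 : δ 0 = 0) : ∀ k, abar δ β k k = 1 := by
  intro k
  induction k with
  | zero => rfl
  | succ k ih =>
      rw [abar, ih, abar_zero_of_lt δ β h0 k (k+1) (by omega), h0]; ring

lemma abar_subdiag (h0 : δ 0 = 0) (h1 : δ 1 = 0) :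
    ∀ k, abar δ β (k + 1) k = (k + 1 : ℕ) * β := by
  intro k
  induction k with
  | zero => show δ (abar δ β 0 0) + β * abar δ β 0 0 = _; rw [abar, h1]; push_cast; ring
  | succ k ih =>
      rw [abar, ih, abar_diag δ β h0, h1]; push_cast; ring

lemma abar_mem (E : Subfield Ω) (hEδ : ∀ x ∈ E, δ x ∈ E) (hβ : β ∈ E) :
    ∀ k j, abar δ β k j ∈ E := by
  intro k
  induction k with
  | zero =>
      intro j
      match j with
      | 0 => exact E.one_mem
      | j + 1 => exact E.zero_mem
  | succ k ih =>
      intro j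
      match j with
      | 0 => exact E.add_mem (hEδ _ (ih 0)) (E.mul_mem hβ (ih 0))
      | j + 1 =>
          exact E.add_mem (E.add_mem (hEδ _ (ih (j+1))) (E.mul_mem hβ (ih (j+1)))) (ih j)

lemma delta_sum (hadd : ∀ a b : Ω, δ (a + b) = δ a + δ b) (h0 : δ 0 = 0)
    (s : Finset ℕ) (f : ℕ → Ω) : δ (∑ i ∈ s, f i) = ∑ i ∈ s, δ (f i) := by
  classical
  induction s using Finset.induction with
  | empty => simpa
  | insert _ _ hx ih => rw [Finset.sum_insert hx, Finset.sum_insert hx, hadd, ih]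

lemma abar_leibniz (hadd : ∀ a b : Ω, δ (a + b) = δ a + δ b)
    (hmul : ∀ a b : Ω, δ (a * b) = a * δ b + δ a * b)
    (h0 : δ 0 = 0) (u : Ω) (hu : δ u = β * u) :
    ∀ k w, δ^[k] (u * w) = ∑ j ∈ Finset.range (k + 1), abar δ β k j * (u * δ^[j] w) := by
  intro k
  induction k with
  | zero => intro w; simp [abar]
  | succ k ih =>
      intro w
      rw [Function.iterate_succ_apply', ih, delta_sum δ hadd h0]
      have hterm : ∀ j, δ (abar δ β k j * (u * δ^[j] w)) =
          (δ (abar δ β k j) + β * abar δ β k j) * (u * δ^[j] w)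
            + abar δ β k j * (u * δ^[j+1] w) := by
        intro j
        rw [hmul, hmul, hu]
        simp only [Function.iterate_succ_apply']
        ring
      rw [Finset.sum_congr rfl fun j _ => hterm j, Finset.sum_add_distrib]
      have e1 : ∑ j ∈ Finset.range (k + 1),
          (δ (abar δ β k j) + β * abar δ β k j) * (u * δ^[j] w)
          = (δ (abar δ β k 0) + β * abar δ β k 0) * (u * w)
            + ∑ j ∈ Finset.range (k + 1),
              (δ (abar δ β k (j+1)) + β * abar δ β k (j+1)) * (u * δ^[j+1] w) := by
        rw [Finset.sum_range_succ'
          (fun j => (δ (abar δ β k j) + β * abar δ β k j) * (u * δ^[j] w)) k]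
        rw [Finset.sum_range_succ
          (fun j => (δ (abar δ β k (j+1)) + β * abar δ β k (j+1)) * (u * δ^[j+1] w)) k]
        rw [abar_zero_of_lt δ β h0 k (k+1) (by omega), h0]
        simp only [Function.iterate_zero_apply, mul_zero, add_zero, zero_mul]
        ring
      rw [e1]
      rw [Finset.sum_range_succ' (fun j => abar δ β (k+1) j * (u * δ^[j] w)) (k+1)]
      have e2 : ∀ j ∈ Finset.range (k + 1),
          abar δ β (k+1) (j+1) * (u * δ^[j+1] w)
          = (δ (abar δ β k (j+1)) + β * abar δ β k (j+1)) * (u * δ^[j+1] w)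
            + abar δ β k j * (u * δ^[j+1] w) := by
        intro j _; rw [abar]; ring
      rw [Finset.sum_congr rfl e2, Finset.sum_add_distrib]
      show _ = _ + abar δ β (k+1) 0 * (u * δ^[0] w)
      rw [abar]
      simp only [Function.iterate_zero_apply]
      ring

end aux

/-- **Exponential product transformation.**  Let `E ⊆ Ω` be differential fields of
characteristic zero, `b₀, …, b_{n-1} ∈ E`, and let `c ∈ Ω` be nonzero with
`δ(c) = (1/n)·b_{n-1}·c`.  Then there are `c₀, …, c_{n-2} ∈ E` such that every solution
`y ∈ Ω` of `y⁽ⁿ⁾ + b_{n-1} y⁽ⁿ⁻¹⁾ + ⋯ + b₁ y⁽¹⁾ + b₀ y = 0` yields a solution `z = c·y`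
of `z⁽ⁿ⁾ + c_{n-2} z⁽ⁿ⁻²⁾ + ⋯ + c₁ z⁽¹⁾ + c₀ z = 0`: the transformation eliminates the
coefficient of `z⁽ⁿ⁻¹⁾` and the remaining coefficients lie in `E`. -/
theorem exponential_product_eliminates_subleading_coefficient
    (Ω : Type*) [Field Ω] [CharZero Ω] (δ : Ω → Ω)
    (hδadd : ∀ a b : Ω, δ (a + b) = δ a + δ b)
    (hδmul : ∀ a b : Ω, δ (a * b) = a * δ b + δ a * b)
    (E : Subfield Ω) (hEδ : ∀ x ∈ E, δ x ∈ E)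
    (n : ℕ) (hn : 1 ≤ n)
    (b : Fin n → Ω) (hb : ∀ i, b i ∈ E)
    (c : Ω) (hc : c ≠ 0)
    (hδc : δ c = (n : Ω)⁻¹ * b ⟨n - 1, by omega⟩ * c) :
    ∃ c' : Fin (n - 1) → Ω, (∀ i, c' i ∈ E) ∧
      ∀ y : Ω, δ^[n] y + ∑ i : Fin n, b i * δ^[(i : ℕ)] y = 0 →
        δ^[n] (c * y) + ∑ i : Fin (n - 1), c' i * δ^[(i : ℕ)] (c * y) = 0 := by
  have h0 : δ 0 = 0 := by have := hδadd 0 0; simpa using this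
  have h1 : δ 1 = 0 := by have := hδmul 1 1; simpa using this
  have hnΩ : (n : Ω) ≠ 0 := Nat.cast_ne_zero.mpr (by omega)
  set k₀ : Fin n := ⟨n - 1, by omega⟩ with hk₀
  set β : Ω := -((n : Ω)⁻¹ * b k₀) with hβ
  have hβE : β ∈ E :=
    E.neg_mem (E.mul_mem (E.inv_mem (natCast_mem E n)) (hb k₀))
  have hδu : δ c⁻¹ = β * c⁻¹ := by
    have h2 : δ (c * c⁻¹) = 0 := by rw [mul_inv_cancel₀ hc, h1]
    rw [hδmul, hδc] at h2
    have h3 : c * δ c⁻¹ = c * (β * c⁻¹) := by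
      rw [hβ]
      linear_combination h2
    exact mul_left_cancel₀ hc h3
  set C : ℕ → Ω := fun j => abar δ β n j + ∑ i : Fin n, b i * abar δ β i j with hC
  refine ⟨fun j => C j, ?_, ?_⟩
  · intro j
    exact E.add_mem (abar_mem δ β E hEδ hβE n j)
      (E.sum_mem fun i _ => E.mul_mem (hb i) (abar_mem δ β E hEδ hβE i j))
  intro y hy
  set w : Ω := c * y with hw
  have huw : c⁻¹ * w = y := by rw [hw]; field_simp
  have key : ∑ j ∈ Finset.range (n + 1), C j * δ^[j] w = 0 := by
    have hexp : ∀ m : ℕ, δ^[m] y =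
        ∑ j ∈ Finset.range (m + 1), abar δ β m j * (c⁻¹ * δ^[j] w) := by
      intro m
      rw [← huw]
      exact abar_leibniz δ β hδadd hδmul h0 c⁻¹ hδu m w
    have hextend : ∀ i : Fin n,
        ∑ j ∈ Finset.range ((i : ℕ) + 1), abar δ β i j * (c⁻¹ * δ^[j] w)
        = ∑ j ∈ Finset.range (n + 1), abar δ β i j * (c⁻¹ * δ^[j] w) := by
      intro i
      refine Finset.sum_subset (Finset.range_subset_range.2 (by omega)) ?_
      intro j _ hj
      rw [abar_zero_of_lt δ β h0 i j (by simp at hj ⊢; omega)]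
      ring
    have hy2 : (∑ j ∈ Finset.range (n + 1), abar δ β n j * (c⁻¹ * δ^[j] w))
        + ∑ i : Fin n, b i * ∑ j ∈ Finset.range (n + 1), abar δ β i j * (c⁻¹ * δ^[j] w)
          = 0 := by
      rw [← hy]
      congr 1
      · exact (hexp n).symm
      · refine Finset.sum_congr rfl fun i _ => ?_
        rw [hexp i, hextend i]
    have hswap : ∑ i : Fin n, b i * ∑ j ∈ Finset.range (n + 1),
          abar δ β i j * (c⁻¹ * δ^[j] w)
        = ∑ j ∈ Finset.range (n + 1),
            (∑ i : Fin n, b i * abar δ β i j) * (c⁻¹ * δ^[j] w) := by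
      simp_rw [Finset.mul_sum]
      rw [Finset.sum_comm]
      refine Finset.sum_congr rfl fun j _ => ?_
      rw [Finset.sum_mul]
      exact Finset.sum_congr rfl fun i _ => by ring
    have hy3 : c⁻¹ * ∑ j ∈ Finset.range (n + 1), C j * δ^[j] w = 0 := by
      have expand : c⁻¹ * ∑ j ∈ Finset.range (n + 1), C j * δ^[j] w
          = (∑ j ∈ Finset.range (n + 1), abar δ β n j * (c⁻¹ * δ^[j] w))
            + ∑ j ∈ Finset.range (n + 1),
                (∑ i : Fin n, b i * abar δ β i j) * (c⁻¹ * δ^[j] w) := by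
        rw [Finset.mul_sum, ← Finset.sum_add_distrib]
        refine Finset.sum_congr rfl fun j _ => ?_
        simp only [hC]
        ring
      rw [expand, ← hswap]
      exact hy2
    exact (mul_eq_zero.mp hy3).resolve_left (inv_ne_zero hc)
  have hCn : C n = 1 := by
    simp only [hC]
    rw [abar_diag δ β h0]
    rw [Finset.sum_eq_zero fun i _ => by
      rw [abar_zero_of_lt δ β h0 i n i.isLt]; ring]
    ring
  have hCn1 : C (n - 1) = 0 := by
    simp only [hC]
    obtain ⟨m, rfl⟩ : ∃ m, n = m + 1 := ⟨n - 1, by omega⟩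
    simp only [Nat.add_sub_cancel]
    rw [abar_subdiag δ β h0 h1 m]
    have hz : ∀ i : Fin (m + 1), i ≠ k₀ → b i * abar δ β i m = 0 := by
      intro i hi
      have hne : (i : ℕ) ≠ m := by
        intro h
        exact hi (Fin.ext (by simp [hk₀, h]))
      have hi' : (i : ℕ) < m := by have := i.isLt; omega
      rw [abar_zero_of_lt δ β h0 i m hi']; ring
    rw [Fintype.sum_eq_single k₀ hz]
    have hk : (k₀ : ℕ) = m := by simp [hk₀]
    have hm : ((m : Ω) + 1) ≠ 0 := by exact_mod_cast hnΩ
    rw [hk, abar_diag δ β h0, mul_one, hβ]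
    push_cast
    field_simp
    ring
  obtain ⟨m, rfl⟩ : ∃ m, n = m + 1 := ⟨n - 1, by omega⟩
  simp only [Nat.add_sub_cancel] at hCn1 ⊢
  rw [Finset.sum_range_succ, Finset.sum_range_succ] at key
  rw [hCn, hCn1] at key
  have hfin : δ^[m + 1] w + ∑ j ∈ Finset.range m, C j * δ^[j] w = 0 := by
    linear_combination key
  rw [← hfin]
  congr 1
  exact Fin.sum_univ_eq_sum_range (fun j => C j * δ^[j] w) m
end
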